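/- Let U have size N, let 1 ≤ n ≤ N, let 0 ≤ m_t < M_t ≤ N, and let X = {x ∈ {0,1}^U : m_t ≤ Σ_i x_i ≤ M_t}. If n ≤ m_t and n ≤ N − M_t, then the smallest ε ≥ 0 such that the Horvitz–Thompson mechanism under simple random sampling of size n satisfies (ε, 0)-differential privacy on X is ε* = ln( max{ (N − M_t + 1)/(N − M_t + 1 − n), (m_t + 1)/(m_t + 1 − n) } ); that is, (ε,0)-differential privacy holds on X if and only if ε ≥ ε*. -/

import Mathlib

attribute [local instance] Classical.propDecidable

noncomputable section

/-- First-order inclusion probability `p_i = ∑_{s ∋ i} p(s)`. -/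
def incl {U : Type*} [Fintype U] (p : Finset U → ℝ) (i : U) : ℝ :=
  ∑ s ∈ Finset.univ.filter (fun s : Finset U => i ∈ s), p s

/-- Horvitz–Thompson estimator `t̂(x,s) = ∑_{i ∈ s} x_i / p_i`. -/
def tHat {U : Type*} [Fintype U] (p : Finset U → ℝ) (x : U → ℝ) (s : Finset U) : ℝ :=
  ∑ i ∈ s, x i / incl p i

/-- Probability of the event `E` under the sampling design `p`. -/
def Pr {U : Type*} [Fintype U] (p : Finset U → ℝ) (E : Finset U → Prop) : ℝ :=
  ∑ s ∈ Finset.univ.filter E, p s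

/-- Two data vectors are neighbors if they differ in at most one coordinate. -/
def Neighbor {U : Type*} (x x' : U → ℝ) : Prop :=
  {j | x j ≠ x' j}.Subsingleton

set_option linter.unusedSectionVars false
set_option maxHeartbeats 1000000

lemma choose_id (t k : ℕ) : (t+1).choose k * (t+1-k) = (t+1) * t.choose k := by
  have h1 := Nat.choose_succ_right_eq (t+1) k
  have h2 := Nat.add_one_mul_choose_eq t k
  omega

lemma cross (q μ t' : ℕ) (h : μ ≤ t') : (q+t'+1)*(μ+1) ≤ (q+μ+1)*(t'+1) := by
  obtain ⟨d, rfl⟩ := Nat.exists_eq_add_of_le h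
  calc (q+(μ+d)+1)*(μ+1) = (q+μ+1)*(μ+1) + d*(μ+1) := by ring
    _ ≤ (q+μ+1)*(μ+1) + (q+μ+1)*d := by
        exact Nat.add_le_add_left (by rw [mul_comm d]; exact Nat.mul_le_mul_right d (by omega)) _
    _ = (q+μ+1)*((μ+d)+1) := by ring

-- step1': h(T+1,k) ratio bound, subtraction-free. n = k+m, t = k+m+t', c = k+m+c'.
lemma step1' (k m t' c' : ℕ) :
    (k+m+t'+1).choose k * (k+m+c').choose m * (t'+1)
      ≤ (k+m+t').choose k * (k+m+c'+1).choose m * (k+m+t'+1) := by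
  have hA : (k+m+t'+1).choose k * (m+t'+1) = (k+m+t'+1) * (k+m+t').choose k := by
    have := choose_id (k+m+t') k
    have h : k+m+t'+1-k = m+t'+1 := by omega
    rw [h] at this; exact this
  have hB : (k+m+c'+1) * (k+m+c').choose m = (k+m+c'+1).choose m * (k+c'+1) := by
    have := choose_id (k+m+c') m
    have h : k+m+c'+1-m = k+c'+1 := by omega
    rw [h] at this; omega
  apply Nat.le_of_mul_le_mul_right _ (show 0 < (m+t'+1)*(k+m+c'+1) by positivity)
  calc (k+m+t'+1).choose k * (k+m+c').choose m * (t'+1) * ((m+t'+1)*(k+m+c'+1))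
      = ((k+m+t'+1).choose k * (m+t'+1)) * ((k+m+c'+1) * (k+m+c').choose m) * (t'+1) := by ring
    _ = ((k+m+t'+1) * (k+m+t').choose k) * ((k+m+c'+1).choose m * (k+c'+1)) * (t'+1) := by
        rw [hA, hB]
    _ = ((k+m+t').choose k * (k+m+c'+1).choose m * (k+m+t'+1)) * ((k+c'+1)*(t'+1)) := by ring
    _ ≤ ((k+m+t').choose k * (k+m+c'+1).choose m * (k+m+t'+1)) * ((m+t'+1)*(k+m+c'+1)) := by
        apply Nat.mul_le_mul_left
        calc (k+c'+1)*(t'+1) ≤ (k+m+c'+1)*(m+t'+1) := Nat.mul_le_mul (by omega) (by omega)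
          _ = (m+t'+1)*(k+m+c'+1) := by ring

lemma step2' (k m t' c' : ℕ) :
    (k+m+t').choose k * (k+m+c'+1).choose m * (c'+1)
      ≤ (k+m+t'+1).choose k * (k+m+c').choose m * (k+m+c'+1) := by
  have hA : (k+m+t'+1) * (k+m+t').choose k = (k+m+t'+1).choose k * (m+t'+1) := by
    have := choose_id (k+m+t') k
    have h : k+m+t'+1-k = m+t'+1 := by omega
    rw [h] at this; omega
  have hB : (k+m+c'+1).choose m * (k+c'+1) = (k+m+c'+1) * (k+m+c').choose m := by
    have := choose_id (k+m+c') m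
    have h : k+m+c'+1-m = k+c'+1 := by omega
    rw [h] at this; exact this
  apply Nat.le_of_mul_le_mul_right _ (show 0 < (k+m+t'+1)*(k+c'+1) by positivity)
  calc (k+m+t').choose k * (k+m+c'+1).choose m * (c'+1) * ((k+m+t'+1)*(k+c'+1))
      = ((k+m+t'+1) * (k+m+t').choose k) * ((k+m+c'+1).choose m * (k+c'+1)) * (c'+1) := by ring
    _ = ((k+m+t'+1).choose k * (m+t'+1)) * ((k+m+c'+1) * (k+m+c').choose m) * (c'+1) := by
        rw [hA, hB]
    _ = ((k+m+t'+1).choose k * (k+m+c').choose m * (k+m+c'+1)) * ((m+t'+1)*(c'+1)) := by ring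
    _ ≤ ((k+m+t'+1).choose k * (k+m+c').choose m * (k+m+c'+1)) * ((k+m+t'+1)*(k+c'+1)) := by
        apply Nat.mul_le_mul_left
        exact Nat.mul_le_mul (by omega) (by omega)

lemma stepA (n mt t c k : ℕ) (hk : k ≤ n) (hnmt : n ≤ mt) (hmt : mt ≤ t) (hnc : n ≤ c) :
    (t+1).choose k * c.choose (n-k) * (mt+1-n) ≤ t.choose k * (c+1).choose (n-k) * (mt+1) := by
  obtain ⟨m, rfl⟩ := Nat.exists_eq_add_of_le hk
  obtain ⟨t', ht⟩ := Nat.exists_eq_add_of_le hmt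
  obtain ⟨μ, hμ⟩ := Nat.exists_eq_add_of_le hnmt
  obtain ⟨c', hc⟩ := Nat.exists_eq_add_of_le hnc
  have e1 : t = k+m+(μ+t') := by omega
  have e2 : c = k+m+c' := by omega
  have e3 : k+m-k = m := by omega
  have e4 : mt+1-(k+m) = μ+1 := by omega
  have e5 : mt+1 = k+m+μ+1 := by omega
  subst e1 e2
  rw [e3, e4, e5]
  -- goal: (k+m+(μ+t')+1).choose k * (k+m+c').choose m * (μ+1) ≤ (k+m+(μ+t')).choose k * (k+m+c'+1).choose m * (k+m+μ+1)
  have h1 := step1' k m (μ+t') c'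
  apply Nat.le_of_mul_le_mul_right _ (show 0 < (μ+t')+1 by omega)
  calc (k+m+(μ+t')+1).choose k * (k+m+c').choose m * (μ+1) * ((μ+t')+1)
      = ((k+m+(μ+t')+1).choose k * (k+m+c').choose m * ((μ+t')+1)) * (μ+1) := by ring
    _ ≤ ((k+m+(μ+t')).choose k * (k+m+c'+1).choose m * (k+m+(μ+t')+1)) * (μ+1) :=
        Nat.mul_le_mul_right _ h1
    _ = ((k+m+(μ+t')).choose k * (k+m+c'+1).choose m) * ((k+m+(μ+t')+1) * (μ+1)) := by ring
    _ ≤ ((k+m+(μ+t')).choose k * (k+m+c'+1).choose m) * ((k+m+μ+1) * ((μ+t')+1)) := by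
        apply Nat.mul_le_mul_left
        exact cross (k+m) μ (μ+t') (by omega)
    _ = (k+m+(μ+t')).choose k * (k+m+c'+1).choose m * (k+m+μ+1) * ((μ+t')+1) := by ring

lemma stepB (n t c γ k : ℕ) (hk : k ≤ n) (hnt : n ≤ t) (hgeorge : γ ≤ c) (hnγ : n ≤ γ) :
    t.choose k * (c+1).choose (n-k) * (γ+1-n) ≤ (t+1).choose k * c.choose (n-k) * (γ+1) := by
  obtain ⟨m, rfl⟩ := Nat.exists_eq_add_of_le hk
  obtain ⟨ν, hν⟩ := Nat.exists_eq_add_of_le hnγ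
  obtain ⟨d, hd⟩ := Nat.exists_eq_add_of_le hgeorge
  obtain ⟨t', ht⟩ := Nat.exists_eq_add_of_le hnt
  have e1 : t = k+m+t' := by omega
  have e2 : c = k+m+(ν+d) := by omega
  have e3 : k+m-k = m := by omega
  have e4 : γ+1-(k+m) = ν+1 := by omega
  have e5 : γ+1 = k+m+ν+1 := by omega
  subst e1 e2
  rw [e3, e4, e5]
  have h1 := step2' k m t' (ν+d)
  apply Nat.le_of_mul_le_mul_right _ (show 0 < (ν+d)+1 by omega)
  calc (k+m+t').choose k * (k+m+(ν+d)+1).choose m * (ν+1) * ((ν+d)+1)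
      = ((k+m+t').choose k * (k+m+(ν+d)+1).choose m * ((ν+d)+1)) * (ν+1) := by ring
    _ ≤ ((k+m+t'+1).choose k * (k+m+(ν+d)).choose m * (k+m+(ν+d)+1)) * (ν+1) :=
        Nat.mul_le_mul_right _ h1
    _ = ((k+m+t'+1).choose k * (k+m+(ν+d)).choose m) * ((k+m+(ν+d)+1) * (ν+1)) := by ring
    _ ≤ ((k+m+t'+1).choose k * (k+m+(ν+d)).choose m) * ((k+m+ν+1) * ((ν+d)+1)) := by
        apply Nat.mul_le_mul_left
        exact cross (k+m) ν (ν+d) (by omega)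
    _ = (k+m+t'+1).choose k * (k+m+(ν+d)).choose m * (k+m+ν+1) * ((ν+d)+1) := by ring
lemma count_card_inter {U : Type*} [Fintype U] (S : Finset U) (n k : ℕ) (hk : k ≤ n) :
    ((Finset.univ : Finset (Finset U)).filter
      (fun s => s.card = n ∧ (s ∩ S).card = k)).card
      = S.card.choose k * Sᶜ.card.choose (n - k) := by
  classical
  rw [← Finset.card_powersetCard, ← Finset.card_powersetCard, ← Finset.card_product]
  apply Finset.card_bij' (i := fun s _ => (s ∩ S, s ∩ Sᶜ))
    (j := fun q _ => q.1 ∪ q.2)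
  · intro s hs
    simp only [Finset.mem_filter, Finset.mem_univ, true_and] at hs
    obtain ⟨hcard, hint⟩ := hs
    have hsd : s ∩ Sᶜ = s \ S := by
      ext a; simp [Finset.mem_sdiff, Finset.mem_inter, Finset.mem_compl]
    have hc2 : (s ∩ Sᶜ).card = n - k := by
      rw [hsd]
      have := Finset.card_inter_add_card_sdiff s S
      omega
    simp only [Finset.mem_product, Finset.mem_powersetCard]
    exact ⟨⟨Finset.inter_subset_right, hint⟩, ⟨Finset.inter_subset_right, hc2⟩⟩
  · intro q hq
    simp only [Finset.mem_product, Finset.mem_powersetCard] at hq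
    obtain ⟨⟨h1s, h1c⟩, ⟨h2s, h2c⟩⟩ := hq
    have hdisj : Disjoint q.1 q.2 :=
      Disjoint.mono h1s h2s disjoint_compl_right
    have hint : (q.1 ∪ q.2) ∩ S = q.1 := by
      ext a
      simp only [Finset.mem_inter, Finset.mem_union]
      constructor
      · rintro ⟨h | h, haS⟩
        · exact h
        · exact absurd haS (Finset.mem_compl.mp (h2s h))
      · intro h; exact ⟨Or.inl h, h1s h⟩
    simp only [Finset.mem_filter, Finset.mem_univ, true_and]
    constructor
    · rw [Finset.card_union_of_disjoint hdisj, h1c, h2c]; omega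
    · rw [hint, h1c]
  · intro s hs
    simp only
    ext a
    simp only [Finset.mem_union, Finset.mem_inter, Finset.mem_compl]
    tauto
  · intro q hq
    simp only [Finset.mem_product, Finset.mem_powersetCard] at hq
    obtain ⟨⟨h1s, h1c⟩, ⟨h2s, h2c⟩⟩ := hq
    have hint : (q.1 ∪ q.2) ∩ S = q.1 := by
      ext a
      simp only [Finset.mem_inter, Finset.mem_union]
      constructor
      · rintro ⟨h | h, haS⟩
        · exact h
        · exact absurd haS (Finset.mem_compl.mp (h2s h))
      · intro h; exact ⟨Or.inl h, h1s h⟩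
    have hint2 : (q.1 ∪ q.2) ∩ Sᶜ = q.2 := by
      ext a
      simp only [Finset.mem_inter, Finset.mem_union, Finset.mem_compl]
      constructor
      · rintro ⟨h | h, haS⟩
        · exact absurd (h1s h) haS
        · exact h
      · intro h; exact ⟨Or.inr h, Finset.mem_compl.mp (h2s h)⟩
    have : ((q.1 ∪ q.2) ∩ S, (q.1 ∪ q.2) ∩ Sᶜ) = (q.1, q.2) := by rw [hint, hint2]
    simpa using this
lemma extract (t n : ℕ) (hn : n ≤ t) (Cd : ℝ) (hCd : 0 < Cd) (E : ℝ)
    (h : (((t+1).choose n : ℕ):ℝ)/Cd ≤ E * (((t.choose n : ℕ):ℝ)/Cd)) :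
    ((t:ℝ)+1)/((t:ℝ)+1-(n:ℝ)) ≤ E := by
  have hb : (0:ℝ) < (t.choose n : ℝ) := by exact_mod_cast Nat.choose_pos hn
  have h2 : (((t+1).choose n : ℕ):ℝ) ≤ E * (t.choose n : ℝ) := by
    calc (((t+1).choose n : ℕ):ℝ) = ((((t+1).choose n : ℕ):ℝ)/Cd)*Cd := by
          field_simp
      _ ≤ (E * (((t.choose n : ℕ):ℝ)/Cd))*Cd := mul_le_mul_of_nonneg_right h hCd.le
      _ = E * (t.choose n : ℝ) := by field_simp
  have hd : (0:ℝ) < (t:ℝ)+1-(n:ℝ) := by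
    have : (n:ℝ) ≤ t := by exact_mod_cast hn
    linarith
  rw [div_le_iff₀ hd]
  have hid := choose_id t n
  have hidR : ((t+1).choose n : ℝ) * ((t:ℝ)+1-(n:ℝ)) = ((t:ℝ)+1) * (t.choose n:ℝ) := by
    have h3 : (((t+1).choose n * (t+1-n) : ℕ):ℝ) = (((t+1) * t.choose n : ℕ):ℝ) := by
      exact_mod_cast congrArg (fun z : ℕ => (z:ℝ)) hid
    push_cast [Nat.cast_sub (by omega : n ≤ t+1)] at h3
    linarith [h3]
  nlinarith [mul_le_mul_of_nonneg_right h2 hd.le, hidR, hb]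

lemma binary_sum {U : Type*} [Fintype U] (x : U → ℝ) (hx : ∀ i, x i = 0 ∨ x i = 1) :
    ∑ i, x i = ((Finset.univ.filter (fun i => x i = 1)).card : ℝ) := by
  classical
  rw [← Finset.sum_filter_add_sum_filter_not Finset.univ (fun i => x i = 1) x]
  have h2 : ∑ i ∈ Finset.univ.filter (fun i => ¬ x i = 1), x i = 0 := by
    apply Finset.sum_eq_zero
    intro i hi
    simp only [Finset.mem_filter] at hi
    rcases hx i with h | h
    · exact h
    · exact absurd h hi.2
  have h1 : ∑ i ∈ Finset.univ.filter (fun i => x i = 1), x i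
      = (((Finset.univ.filter (fun i => x i = 1)).card : ℕ) : ℝ) := by
    rw [Finset.sum_congr rfl (fun i hi => (Finset.mem_filter.mp hi).2), Finset.sum_const,
      nsmul_eq_mul, mul_one]
  rw [h1, h2, add_zero]

lemma filter_indicator {U : Type*} [Fintype U] (S : Finset U) :
    Finset.univ.filter (fun i => (if i ∈ S then (1:ℝ) else 0) = 1) = S := by
  ext a
  by_cases h : a ∈ S <;> simp [h]

lemma sum_indicator {U : Type*} [Fintype U] (S : Finset U) :
    ∑ i, (if i ∈ S then (1:ℝ) else 0) = (S.card : ℝ) := by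
  rw [binary_sum _ (fun i => by by_cases h : i ∈ S <;> simp [h]), filter_indicator]

lemma sum_pick (N n : ℕ) (hn1 : 1 ≤ n) (hnN : n ≤ N) (k₀ : ℕ) (hk₀ : k₀ ≤ n) (f : ℕ → ℝ)
    {inst : ∀ k : ℕ, Decidable (((N:ℝ)/n) * (k:ℝ) ∈ ({((N:ℝ)/n) * (k₀:ℝ)} : Set ℝ))} :
    (∑ k ∈ Finset.range (n+1),
      if ((N:ℝ)/n) * (k:ℝ) ∈ ({((N:ℝ)/n) * (k₀:ℝ)} : Set ℝ) then f k else 0) = f k₀ := by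
  classical
  have h1 : (0:ℝ) < n := by exact_mod_cast hn1
  have h2 : (0:ℝ) < N := by exact_mod_cast lt_of_lt_of_le hn1 hnN
  have hv : ((N:ℝ)/n) ≠ 0 := by positivity
  have hiff : ∀ k : ℕ, (((N:ℝ)/n) * (k:ℝ) ∈ ({((N:ℝ)/n) * (k₀:ℝ)} : Set ℝ)) ↔ k = k₀ := by
    intro k
    simp only [Set.mem_singleton_iff]
    rw [mul_right_inj' hv]
    exact Nat.cast_inj
  rw [Finset.sum_congr rfl (fun k _ => by rw [if_congr (hiff k) rfl rfl])]
  rw [Finset.sum_ite_eq' (Finset.range (n+1)) k₀ f]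
  simp [Nat.lt_succ_iff, hk₀]
section ctx
variable {U : Type*} [Fintype U] (N n : ℕ) (hN : Fintype.card U = N) (hn1 : 1 ≤ n) (hnN : n ≤ N)
  (p : Finset U → ℝ)
  (hdef : ∀ s : Finset U, p s = if s.card = n then (1 : ℝ) / (N.choose n) else 0)

include hN hn1 hnN hdef

lemma incl_eq (i : U) : incl p i = (n : ℝ) / N := by
  classical
  have hcount : (Finset.univ.filter (fun s : Finset U => i ∈ s ∧ s.card = n)).card
      = (N-1).choose (n-1) := by
    have heq : (Finset.univ.filter (fun s : Finset U => i ∈ s ∧ s.card = n))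
        = (Finset.univ.filter (fun s : Finset U => s.card = n ∧ (s ∩ ({i} : Finset U)).card = 1)) := by
      apply Finset.filter_congr
      intro s _
      constructor
      · rintro ⟨hi, hc⟩
        refine ⟨hc, ?_⟩
        have : s ∩ ({i} : Finset U) = {i} := by
          ext a; simp only [Finset.mem_inter, Finset.mem_singleton]
          constructor
          · exact fun h => h.2
          · rintro rfl; exact ⟨hi, rfl⟩
        rw [this, Finset.card_singleton]
      · rintro ⟨hc, h1⟩
        refine ⟨?_, hc⟩
        obtain ⟨a, ha⟩ := Finset.card_eq_one.mp h1
        have : a ∈ s ∩ ({i} : Finset U) := by rw [ha]; exact Finset.mem_singleton_self a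
        simp only [Finset.mem_inter, Finset.mem_singleton] at this
        rw [← this.2]; exact this.1
    rw [heq, count_card_inter _ n 1 hn1]
    have h1 : ({i} : Finset U).card = 1 := Finset.card_singleton i
    have h2 : (({i} : Finset U)ᶜ).card = N - 1 := by
      rw [Finset.card_compl, h1, hN]
    rw [h1, h2]
    simp
  have hNpos : 0 < N := lt_of_lt_of_le hn1 hnN
  unfold incl
  have : ∀ s ∈ Finset.univ.filter (fun s : Finset U => i ∈ s), p s
      = if s.card = n then (1 : ℝ) / (N.choose n) else 0 := fun s _ => hdef s
  rw [Finset.sum_congr rfl this, Finset.sum_ite, Finset.sum_const, Finset.sum_const,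
    Finset.filter_filter]
  simp only [smul_zero, add_zero, nsmul_eq_mul]
  rw [hcount]
  -- ((N-1).choose (n-1) : ℝ) * (1 / N.choose n) = n / N
  have hkey : N * (N-1).choose (n-1) = N.choose n * n := by
    have h := Nat.add_one_mul_choose_eq (N-1) (n-1)
    have e1 : N - 1 + 1 = N := by omega
    have e2 : n - 1 + 1 = n := by omega
    rw [e1, e2] at h
    exact h
  have hC : ((N.choose n : ℝ)) ≠ 0 := by
    have := Nat.choose_pos hnN; positivity
  have hN0 : ((N:ℝ)) ≠ 0 := by positivity
  have hcast : ((N:ℝ)) * ((N-1).choose (n-1) : ℝ) = (N.choose n : ℝ) * n := by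
    exact_mod_cast hkey
  field_simp
  linear_combination hcast

lemma tHat_eq (x : U → ℝ) (hx : ∀ i, x i = 0 ∨ x i = 1) (s : Finset U) :
    tHat p x s = ((N : ℝ)/n) * ((s ∩ Finset.univ.filter (fun i => x i = 1)).card : ℝ) := by
  classical
  have hNpos : 0 < N := lt_of_lt_of_le hn1 hnN
  unfold tHat
  have hincl : ∀ i : U, incl p i = (n:ℝ)/N := incl_eq N n hN hn1 hnN p hdef
  have hsum : ∑ i ∈ s, x i / incl p i = ∑ i ∈ s, x i * ((N:ℝ)/n) := by
    apply Finset.sum_congr rfl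
    intro i _
    rw [hincl i, div_div_eq_mul_div, mul_div_assoc]
  rw [hsum, ← Finset.sum_mul, mul_comm]
  congr 1
  have hfil : s ∩ Finset.univ.filter (fun i => x i = 1) = s.filter (fun i => x i = 1) := by
    ext a
    simp [Finset.mem_inter, Finset.mem_filter]
  rw [hfil, ← Finset.sum_filter_add_sum_filter_not s (fun i => x i = 1) x]
  have h2 : ∑ i ∈ s.filter (fun i => ¬ x i = 1), x i = 0 := by
    apply Finset.sum_eq_zero
    intro i hi
    simp only [Finset.mem_filter] at hi
    rcases hx i with h | h
    · exact h
    · exact absurd h hi.2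
  have h1 : ∑ i ∈ s.filter (fun i => x i = 1), x i
      = ((s.filter (fun i => x i = 1)).card : ℝ) := by
    rw [Finset.sum_congr rfl (fun i hi => (Finset.mem_filter.mp hi).2), Finset.sum_const,
      nsmul_eq_mul, mul_one]
  rw [h1, h2, add_zero]

lemma Pr_formula (S : Finset U) (A : Set ℝ) :
    Pr p (fun s => ((N : ℝ)/n) * ((s ∩ S).card : ℝ) ∈ A)
      = ∑ k ∈ Finset.range (n+1),
          if ((N : ℝ)/n) * (k : ℝ) ∈ A then
            (S.card.choose k * Sᶜ.card.choose (n-k) : ℝ) / (N.choose n) else 0 := by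
  classical
  unfold Pr
  rw [Finset.sum_filter]
  have hterm : ∀ s : Finset U,
      (if ((N : ℝ)/n) * ((s ∩ S).card : ℝ) ∈ A then p s else 0)
      = if s.card = n then
          (if ((N : ℝ)/n) * ((s ∩ S).card : ℝ) ∈ A then (1:ℝ)/(N.choose n) else 0) else 0 := by
    intro s
    rw [hdef s]
    by_cases h1 : s.card = n <;> by_cases h2 : ((N : ℝ)/n) * ((s ∩ S).card : ℝ) ∈ A <;>
      simp [h1, h2]
  rw [Finset.sum_congr rfl (fun s _ => hterm s), ← Finset.sum_filter]
  rw [← Finset.sum_fiberwise_of_maps_to (g := fun s : Finset U => (s ∩ S).card)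
    (t := Finset.range (n+1)) (fun s hs => by
      simp only [Finset.mem_filter] at hs
      simp only [Finset.mem_range]
      have : (s ∩ S).card ≤ s.card := Finset.card_le_card Finset.inter_subset_left
      omega)]
  apply Finset.sum_congr rfl
  intro k hk
  have hkn : k ≤ n := by simpa using Nat.lt_succ_iff.mp (Finset.mem_range.mp hk)
  have hinner : ∀ s ∈ (Finset.univ.filter (fun s : Finset U => s.card = n)).filter
      (fun s => (s ∩ S).card = k),
      (if ((N : ℝ)/n) * ((s ∩ S).card : ℝ) ∈ A then (1:ℝ)/(N.choose n) else 0)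
      = (if ((N : ℝ)/n) * (k : ℝ) ∈ A then (1:ℝ)/(N.choose n) else 0) := by
    intro s hs
    simp only [Finset.mem_filter] at hs
    rw [hs.2]
  rw [Finset.sum_congr rfl hinner, Finset.sum_const, Finset.filter_filter,
    count_card_inter S n k hkn, nsmul_eq_mul]
  push_cast
  by_cases h2 : ((N : ℝ)/n) * (k : ℝ) ∈ A <;> simp [h2, mul_comm, div_eq_mul_inv, mul_assoc]

lemma Pr_nonneg (E : Finset U → Prop) : 0 ≤ Pr p E := by
  unfold Pr
  apply Finset.sum_nonneg
  intro s _
  rw [hdef s]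
  split <;> positivity

include hN hn1 hnN hdef in
lemma Pr_binary (x : U → ℝ) (hx : ∀ i, x i = 0 ∨ x i = 1) (A : Set ℝ) :
    Pr p (fun s => tHat p x s ∈ A)
      = ∑ k ∈ Finset.range (n+1),
          if ((N:ℝ)/n)*(k:ℝ) ∈ A then
            (((Finset.univ.filter (fun i => x i = 1)).card.choose k
              * (N - (Finset.univ.filter (fun i => x i = 1)).card).choose (n-k) : ℕ) : ℝ)
              /(N.choose n) else 0 := by
  classical
  have hfun : (fun s => tHat p x s ∈ A)
      = (fun s => ((N:ℝ)/n) * ((s ∩ Finset.univ.filter (fun i => x i = 1)).card : ℝ) ∈ A) := by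
    funext s; rw [tHat_eq N n hN hn1 hnN p hdef x hx s]
  rw [hfun, Pr_formula N n hN hn1 hnN p hdef]
  apply Finset.sum_congr rfl
  intro k _
  have hcc : (Finset.univ.filter (fun i => x i = 1))ᶜ.card
      = N - (Finset.univ.filter (fun i => x i = 1)).card := by
    rw [Finset.card_compl, hN]
  rw [hcc]
  norm_cast

include hN hn1 hnN hdef in
lemma Pr_indicator (S : Finset U) (A : Set ℝ) :
    Pr p (fun s => tHat p (fun i => if i ∈ S then (1:ℝ) else 0) s ∈ A)
      = ∑ k ∈ Finset.range (n+1),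
          if ((N:ℝ)/n)*(k:ℝ) ∈ A then
            ((S.card.choose k * (N - S.card).choose (n-k) : ℕ) : ℝ)/(N.choose n) else 0 := by
  rw [Pr_binary N n hN hn1 hnN p hdef _ (fun i => by by_cases h : i ∈ S <;> simp [h]) A]
  rw [filter_indicator]

end ctx
lemma ratio_up (N n mt T k : ℕ) (hk : k ≤ n) (hnm : n ≤ mt) (hT1 : mt ≤ T)
    (hnc : n ≤ N - (T+1)) (hTN : T+1 ≤ N) :
    (((T+1).choose k * (N-(T+1)).choose (n-k) : ℕ) : ℝ)
      ≤ (((mt:ℝ)+1)/((mt:ℝ)+1-(n:ℝ))) * ((T.choose k * (N-T).choose (n-k) : ℕ) : ℝ) := by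
  set c := N - (T+1) with hc
  have hc1 : N - T = c + 1 := by omega
  have hstep := stepA n mt T c k hk hnm hT1 hnc
  have hd : (0:ℝ) < (mt:ℝ)+1-(n:ℝ) := by
    have : (n:ℝ) ≤ mt := by exact_mod_cast hnm
    linarith
  rw [hc1, div_mul_eq_mul_div, le_div_iff₀ hd]
  have hcast : ((mt:ℝ)+1-(n:ℝ)) = ((mt+1-n : ℕ):ℝ) := by
    rw [Nat.cast_sub (by omega : n ≤ mt+1)]; push_cast; ring
  rw [hcast]
  have hstR : (((T+1).choose k * c.choose (n-k) * (mt+1-n) : ℕ) : ℝ)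
      ≤ ((T.choose k * (c+1).choose (n-k) * (mt+1) : ℕ) : ℝ) := by exact_mod_cast hstep
  push_cast at hstR ⊢
  nlinarith [hstR]

lemma ratio_down (N n Mt T k : ℕ) (hk : k ≤ n) (hnM : n ≤ N - Mt) (hMN : Mt ≤ N)
    (hnT : n ≤ T) (hT2 : T+1 ≤ Mt) :
    ((T.choose k * (N-T).choose (n-k) : ℕ) : ℝ)
      ≤ (((N:ℝ)-(Mt:ℝ)+1)/((N:ℝ)-(Mt:ℝ)+1-(n:ℝ))) * (((T+1).choose k * (N-(T+1)).choose (n-k) : ℕ) : ℝ) := by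
  set c := N - (T+1) with hc
  set γ := N - Mt with hγ
  have hc1 : N - T = c + 1 := by omega
  have hgc : γ ≤ c := by omega
  have hstep := stepB n T c γ k hk hnT hgc hnM
  have hd : (0:ℝ) < (N:ℝ)-(Mt:ℝ)+1-(n:ℝ) := by
    have h1 : ((γ:ℝ)) = (N:ℝ)-(Mt:ℝ) := by
      rw [hγ, Nat.cast_sub hMN]
    have : (n:ℝ) ≤ (γ:ℝ) := by exact_mod_cast hnM
    linarith
  rw [hc1, div_mul_eq_mul_div, le_div_iff₀ hd]
  have hcast : ((N:ℝ)-(Mt:ℝ)+1-(n:ℝ)) = ((γ+1-n : ℕ):ℝ) := by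
    rw [Nat.cast_sub (by omega : n ≤ γ+1)]
    push_cast [hγ, Nat.cast_sub hMN]
    ring
  have hcast2 : ((N:ℝ)-(Mt:ℝ)+1) = ((γ+1 : ℕ):ℝ) := by
    push_cast [hγ, Nat.cast_sub hMN]; ring
  rw [hcast, hcast2]
  have hstR : ((T.choose k * (c+1).choose (n-k) * (γ+1-n) : ℕ) : ℝ)
      ≤ (((T+1).choose k * c.choose (n-k) * (γ+1) : ℕ) : ℝ) := by exact_mod_cast hstep
  push_cast at hstR ⊢
  nlinarith [hstR]

lemma sum_up (N n mt Mt T : ℕ) (hnm : n ≤ mt) (hnM : n ≤ N - Mt) (hMN : Mt ≤ N)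
    (hT1 : mt ≤ T) (hT2 : T+1 ≤ Mt) (E : ℝ)
    (hE : ((mt:ℝ)+1)/((mt:ℝ)+1-(n:ℝ)) ≤ E) (c : ℕ → Prop) [DecidablePred c] :
    ∑ k ∈ Finset.range (n+1),
        (if c k then (((T+1).choose k * (N-(T+1)).choose (n-k) : ℕ) : ℝ)/(N.choose n) else 0)
      ≤ E * ∑ k ∈ Finset.range (n+1),
        (if c k then ((T.choose k * (N-T).choose (n-k) : ℕ) : ℝ)/(N.choose n) else 0) := by
  have hd : (0:ℝ) < (mt:ℝ)+1-(n:ℝ) := by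
    have : (n:ℝ) ≤ mt := by exact_mod_cast hnm
    linarith
  have hR : (0:ℝ) ≤ ((mt:ℝ)+1)/((mt:ℝ)+1-(n:ℝ)) := by positivity
  have hE0 : (0:ℝ) ≤ E := le_trans hR hE
  rw [Finset.mul_sum]
  apply Finset.sum_le_sum
  intro k hk
  have hkn : k ≤ n := by
    have := Finset.mem_range.mp hk; omega
  by_cases hc : c k
  · simp only [hc, if_true]
    have h1 := ratio_up N n mt T k hkn hnm hT1 (by omega) (by omega)
    have hC : (0:ℝ) < ((N.choose n : ℕ) : ℝ) := by
      exact_mod_cast Nat.choose_pos (by omega : n ≤ N)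
    calc (((T+1).choose k * (N-(T+1)).choose (n-k) : ℕ) : ℝ)/(N.choose n)
        ≤ (((mt:ℝ)+1)/((mt:ℝ)+1-(n:ℝ)) * ((T.choose k * (N-T).choose (n-k) : ℕ) : ℝ))/(N.choose n) := by
          exact (div_le_div_iff_of_pos_right hC).mpr h1
      _ = ((mt:ℝ)+1)/((mt:ℝ)+1-(n:ℝ)) * (((T.choose k * (N-T).choose (n-k) : ℕ) : ℝ)/(N.choose n)) := by
          ring
      _ ≤ E * (((T.choose k * (N-T).choose (n-k) : ℕ) : ℝ)/(N.choose n)) := by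
          apply mul_le_mul_of_nonneg_right hE
          positivity
  · simp [hc]

lemma sum_down (N n mt Mt T : ℕ) (hnm : n ≤ mt) (hnM : n ≤ N - Mt) (hMN : Mt ≤ N)
    (hT1 : mt ≤ T) (hT2 : T+1 ≤ Mt) (E : ℝ)
    (hE : ((N:ℝ)-(Mt:ℝ)+1)/((N:ℝ)-(Mt:ℝ)+1-(n:ℝ)) ≤ E) (c : ℕ → Prop) [DecidablePred c] :
    ∑ k ∈ Finset.range (n+1),
        (if c k then ((T.choose k * (N-T).choose (n-k) : ℕ) : ℝ)/(N.choose n) else 0)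
      ≤ E * ∑ k ∈ Finset.range (n+1),
        (if c k then (((T+1).choose k * (N-(T+1)).choose (n-k) : ℕ) : ℝ)/(N.choose n) else 0) := by
  have hγ : ((N:ℝ)-(Mt:ℝ)) = ((N - Mt : ℕ):ℝ) := by rw [Nat.cast_sub hMN]
  have hd : (0:ℝ) < (N:ℝ)-(Mt:ℝ)+1-(n:ℝ) := by
    have : (n:ℝ) ≤ ((N - Mt : ℕ):ℝ) := by exact_mod_cast hnM
    rw [hγ]; linarith
  have hnum : (0:ℝ) ≤ (N:ℝ)-(Mt:ℝ)+1 := by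
    have : (0:ℝ) ≤ ((N - Mt : ℕ):ℝ) := by positivity
    rw [hγ]; linarith
  have hR : (0:ℝ) ≤ ((N:ℝ)-(Mt:ℝ)+1)/((N:ℝ)-(Mt:ℝ)+1-(n:ℝ)) := div_nonneg hnum (le_of_lt hd)
  have hE0 : (0:ℝ) ≤ E := le_trans hR hE
  rw [Finset.mul_sum]
  apply Finset.sum_le_sum
  intro k hk
  have hkn : k ≤ n := by
    have := Finset.mem_range.mp hk; omega
  by_cases hc : c k
  · simp only [hc, if_true]
    have h1 := ratio_down N n Mt T k hkn hnM hMN (by omega) hT2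
    have hC : (0:ℝ) < ((N.choose n : ℕ) : ℝ) := by
      exact_mod_cast Nat.choose_pos (by omega : n ≤ N)
    calc ((T.choose k * (N-T).choose (n-k) : ℕ) : ℝ)/(N.choose n)
        ≤ (((N:ℝ)-(Mt:ℝ)+1)/((N:ℝ)-(Mt:ℝ)+1-(n:ℝ)) * (((T+1).choose k * (N-(T+1)).choose (n-k) : ℕ) : ℝ))/(N.choose n) := by
          exact (div_le_div_iff_of_pos_right hC).mpr h1
      _ = ((N:ℝ)-(Mt:ℝ)+1)/((N:ℝ)-(Mt:ℝ)+1-(n:ℝ)) * ((((T+1).choose k * (N-(T+1)).choose (n-k) : ℕ) : ℝ)/(N.choose n)) := by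
          ring
      _ ≤ E * ((((T+1).choose k * (N-(T+1)).choose (n-k) : ℕ) : ℝ)/(N.choose n)) := by
          apply mul_le_mul_of_nonneg_right hE
          positivity
  · simp [hc]

/-- If `n ≤ m_t` and `n ≤ N − M_t`, then under simple random sampling of size `n`
the Horvitz–Thompson mechanism on binary data with total constrained to
`[m_t, M_t]` satisfies `(ε,0)`-differential privacy if and only if
`ε ≥ ln(max{(N−M_t+1)/(N−M_t+1−n), (m_t+1)/(m_t+1−n)})`; that is, this value is
the smallest admissible `ε ≥ 0`. -/
theorem SRS_binary_pure_DP_threshold {U : Type*} [Fintype U]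
    (N n mt Mt : ℕ) (hN : Fintype.card U = N) (hn1 : 1 ≤ n) (hnN : n ≤ N)
    (hmM : mt < Mt) (hMN : Mt ≤ N)
    (p : Finset U → ℝ)
    (hdef : ∀ s : Finset U, p s = if s.card = n then (1 : ℝ) / (N.choose n) else 0)
    (X : Set (U → ℝ))
    (hX : X = {x | (∀ i, x i = 0 ∨ x i = 1) ∧
      (mt : ℝ) ≤ ∑ i, x i ∧ ∑ i, x i ≤ (Mt : ℝ)})
    (hnm : n ≤ mt) (hnM : n ≤ N - Mt) :
    ∀ ε : ℝ,
      ((∀ x ∈ X, ∀ x' ∈ X, Neighbor x x' → ∀ A : Set ℝ,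
          Pr p (fun s => tHat p x s ∈ A) ≤
            Real.exp ε * Pr p (fun s => tHat p x' s ∈ A)) ↔
        Real.log (max (((N : ℝ) - Mt + 1) / ((N : ℝ) - Mt + 1 - n))
          (((mt : ℝ) + 1) / ((mt : ℝ) + 1 - n))) ≤ ε) := by
  intro ε
  classical
  have hNpos : 0 < N := lt_of_lt_of_le hn1 hnN
  have hC : (0:ℝ) < ((N.choose n : ℕ) : ℝ) := by exact_mod_cast Nat.choose_pos hnN
  have hcastγ : ((N:ℝ) - (Mt:ℝ)) = ((N - Mt : ℕ):ℝ) := by rw [Nat.cast_sub hMN]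
  have hnMr : (n:ℝ) ≤ (N:ℝ) - (Mt:ℝ) := by
    rw [hcastγ]; exact_mod_cast hnM
  have hnmr : (n:ℝ) ≤ (mt:ℝ) := by exact_mod_cast hnm
  have hd1 : (0:ℝ) < (N:ℝ) - Mt + 1 - n := by linarith
  have hd2 : (0:ℝ) < (mt:ℝ) + 1 - n := by linarith
  have hR1ge1 : (1:ℝ) ≤ ((N:ℝ) - Mt + 1) / ((N:ℝ) - Mt + 1 - n) := by
    rw [le_div_iff₀ hd1]
    have : (0:ℝ) ≤ (n:ℝ) := by positivity
    linarith
  have hR2ge1 : (1:ℝ) ≤ ((mt:ℝ) + 1) / ((mt:ℝ) + 1 - n) := by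
    rw [le_div_iff₀ hd2]
    have : (0:ℝ) ≤ (n:ℝ) := by positivity
    linarith
  have hmaxpos : (0:ℝ) < max (((N:ℝ) - Mt + 1) / ((N:ℝ) - Mt + 1 - n))
      (((mt:ℝ) + 1) / ((mt:ℝ) + 1 - n)) :=
    lt_of_lt_of_le one_pos (le_trans hR1ge1 (le_max_left _ _))
  constructor
  · -- DP implies lower bound on ε
    intro hDP
    rw [Real.log_le_iff_le_exp hmaxpos]
    apply max_le
    · -- R1 ≤ exp ε, via Mt-side instance
      obtain ⟨S₁, hS₁sub, hS₁card⟩ := Finset.exists_subset_card_eq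
        (show Mt ≤ (Finset.univ : Finset U).card by rw [Finset.card_univ, hN]; omega)
      obtain ⟨j, hj⟩ := Finset.card_pos.mp (show 0 < S₁.card by omega)
      have hjS : j ∈ S₁ := hj
      have hecard : (S₁.erase j).card = Mt - 1 := by
        rw [Finset.card_erase_of_mem hjS, hS₁card]
      have hx0X : (fun i => if i ∈ S₁.erase j then (1:ℝ) else 0) ∈ X := by
        rw [hX]
        refine ⟨fun i => by by_cases h : i ∈ S₁.erase j <;> simp [h], ?_, ?_⟩
        · rw [sum_indicator, hecard]
          exact_mod_cast Nat.le_sub_one_of_lt hmM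
        · rw [sum_indicator, hecard]
          exact_mod_cast (by omega : Mt - 1 ≤ Mt)
      have hx1X : (fun i => if i ∈ S₁ then (1:ℝ) else 0) ∈ X := by
        rw [hX]
        refine ⟨fun i => by by_cases h : i ∈ S₁ <;> simp [h], ?_, ?_⟩
        · rw [sum_indicator, hS₁card]
          exact_mod_cast le_of_lt hmM
        · rw [sum_indicator, hS₁card]
      have hnbr : Neighbor (fun i => if i ∈ S₁.erase j then (1:ℝ) else 0)
          (fun i => if i ∈ S₁ then (1:ℝ) else 0) := by
        intro a ha b hb
        simp only [Set.mem_setOf_eq] at ha hb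
        have key : ∀ i : U,
            (if i ∈ S₁.erase j then (1:ℝ) else 0) ≠ (if i ∈ S₁ then (1:ℝ) else 0) → i = j := by
          intro i hi
          by_contra h
          apply hi
          by_cases h2 : i ∈ S₁ <;> simp [Finset.mem_erase, h, h2]
        rw [key a ha, key b hb]
      have h1 := hDP _ hx0X _ hx1X hnbr ({((N:ℝ)/n) * ((0:ℕ):ℝ)} : Set ℝ)
      rw [Pr_indicator N n hN hn1 hnN p hdef (S₁.erase j),
        Pr_indicator N n hN hn1 hnN p hdef S₁,
        sum_pick N n hn1 hnN 0 (by omega) (inst := fun _ => Classical.propDecidable _), sum_pick N n hn1 hnN 0 (by omega) (inst := fun _ => Classical.propDecidable _)] at h1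
      simp only [Nat.choose_zero_right, one_mul, Nat.sub_zero] at h1
      rw [hecard, hS₁card] at h1
      have he1 : N - (Mt - 1) = (N - Mt) + 1 := by omega
      rw [he1] at h1
      have := extract (N - Mt) n hnM _ hC _ h1
      calc ((N:ℝ) - Mt + 1) / ((N:ℝ) - Mt + 1 - n)
          = (((N - Mt : ℕ):ℝ)+1)/(((N - Mt : ℕ):ℝ)+1-(n:ℝ)) := by rw [← hcastγ]
        _ ≤ Real.exp ε := this
    · -- R2 ≤ exp ε, via mt-side instance
      obtain ⟨S₀, hS₀sub, hS₀card⟩ := Finset.exists_subset_card_eq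
        (show mt + 1 ≤ (Finset.univ : Finset U).card by rw [Finset.card_univ, hN]; omega)
      obtain ⟨j, hj⟩ := Finset.card_pos.mp (show 0 < S₀.card by omega)
      have hjS : j ∈ S₀ := hj
      have hecard : (S₀.erase j).card = mt := by
        rw [Finset.card_erase_of_mem hjS, hS₀card]
        omega
      have hx0X : (fun i => if i ∈ S₀.erase j then (1:ℝ) else 0) ∈ X := by
        rw [hX]
        refine ⟨fun i => by by_cases h : i ∈ S₀.erase j <;> simp [h], ?_, ?_⟩
        · rw [sum_indicator, hecard]
        · rw [sum_indicator, hecard]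
          exact_mod_cast le_of_lt hmM
      have hx1X : (fun i => if i ∈ S₀ then (1:ℝ) else 0) ∈ X := by
        rw [hX]
        refine ⟨fun i => by by_cases h : i ∈ S₀ <;> simp [h], ?_, ?_⟩
        · rw [sum_indicator, hS₀card]
          exact_mod_cast (by omega : mt ≤ mt + 1)
        · rw [sum_indicator, hS₀card]
          exact_mod_cast hmM
      have hnbr : Neighbor (fun i => if i ∈ S₀ then (1:ℝ) else 0)
          (fun i => if i ∈ S₀.erase j then (1:ℝ) else 0) := by
        intro a ha b hb
        simp only [Set.mem_setOf_eq] at ha hb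
        have key : ∀ i : U,
            (if i ∈ S₀ then (1:ℝ) else 0) ≠ (if i ∈ S₀.erase j then (1:ℝ) else 0) → i = j := by
          intro i hi
          by_contra h
          apply hi
          by_cases h2 : i ∈ S₀ <;> simp [Finset.mem_erase, h, h2]
        rw [key a ha, key b hb]
      have h1 := hDP _ hx1X _ hx0X hnbr ({((N:ℝ)/n) * ((n:ℕ):ℝ)} : Set ℝ)
      rw [Pr_indicator N n hN hn1 hnN p hdef S₀,
        Pr_indicator N n hN hn1 hnN p hdef (S₀.erase j),
        sum_pick N n hn1 hnN n (le_refl n) (inst := fun _ => Classical.propDecidable _), sum_pick N n hn1 hnN n (le_refl n) (inst := fun _ => Classical.propDecidable _)] at h1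
      simp only [Nat.sub_self, Nat.choose_zero_right, mul_one] at h1
      rw [hecard, hS₀card] at h1
      exact extract mt n hnm _ hC _ h1
  · -- lower bound on ε implies DP
    intro hε x hxX x' hx'X hnbr A
    rw [hX] at hxX hx'X
    obtain ⟨hx01, hxlo, hxhi⟩ := hxX
    obtain ⟨hx'01, hx'lo, hx'hi⟩ := hx'X
    have hexp : max (((N:ℝ) - Mt + 1) / ((N:ℝ) - Mt + 1 - n))
        (((mt:ℝ) + 1) / ((mt:ℝ) + 1 - n)) ≤ Real.exp ε := by
      rw [← Real.exp_log hmaxpos]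
      exact Real.exp_le_exp.mpr hε
    have hexp1 : (1:ℝ) ≤ Real.exp ε := le_trans (le_trans hR1ge1 (le_max_left _ _)) hexp
    have hE1 : ((N:ℝ)-(Mt:ℝ)+1)/((N:ℝ)-(Mt:ℝ)+1-(n:ℝ)) ≤ Real.exp ε :=
      le_trans (le_max_left _ _) hexp
    have hE2 : ((mt:ℝ)+1)/((mt:ℝ)+1-(n:ℝ)) ≤ Real.exp ε :=
      le_trans (le_max_right _ _) hexp
    set T := (Finset.univ.filter (fun i => x i = 1)).card with hT
    set T' := (Finset.univ.filter (fun i => x' i = 1)).card with hT'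
    have hsx : ∑ i, x i = (T:ℝ) := binary_sum x hx01
    have hsx' : ∑ i, x' i = (T':ℝ) := binary_sum x' hx'01
    rw [Pr_binary N n hN hn1 hnN p hdef x hx01 A, Pr_binary N n hN hn1 hnN p hdef x' hx'01 A]
    rw [← hT, ← hT']
    by_cases hxx : x = x'
    · subst hxx
      have hPr : (0:ℝ) ≤ ∑ k ∈ Finset.range (n+1),
          (if ((N:ℝ)/n)*(k:ℝ) ∈ A then
            ((T.choose k * (N-T).choose (n-k) : ℕ) : ℝ)/(N.choose n) else 0) := by
        apply Finset.sum_nonneg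
        intro k _
        split <;> positivity
      nlinarith [hPr, hexp1]
    · have hexj : ∃ j : U, x j ≠ x' j := by
        by_contra h
        push_neg at h
        exact hxx (funext h)
      obtain ⟨j, hjne⟩ := hexj
      have hoth : ∀ i : U, i ≠ j → x i = x' i := by
        intro i hij
        by_contra h
        exact hij (hnbr (show i ∈ {j | x j ≠ x' j} from h)
          (show j ∈ {j | x j ≠ x' j} from hjne))
      have h1 := Finset.sum_erase_add Finset.univ x (Finset.mem_univ j)
      have h2 := Finset.sum_erase_add Finset.univ x' (Finset.mem_univ j)
      have h3 : ∑ i ∈ Finset.univ.erase j, x i = ∑ i ∈ Finset.univ.erase j, x' i :=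
        Finset.sum_congr rfl (fun i hi => hoth i (Finset.mem_erase.mp hi).1)
      have hTlo : mt ≤ T := by
        have : (mt:ℝ) ≤ (T:ℝ) := by rw [← hsx]; exact hxlo
        exact_mod_cast this
      have hT'lo : mt ≤ T' := by
        have : (mt:ℝ) ≤ (T':ℝ) := by rw [← hsx']; exact hx'lo
        exact_mod_cast this
      have hThi : T ≤ Mt := by
        have : (T:ℝ) ≤ (Mt:ℝ) := by rw [← hsx]; exact hxhi
        exact_mod_cast this
      have hT'hi : T' ≤ Mt := by
        have : (T':ℝ) ≤ (Mt:ℝ) := by rw [← hsx']; exact hx'hi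
        exact_mod_cast this
      rcases hx01 j with hxj | hxj <;> rcases hx'01 j with hx'j | hx'j
      · exact absurd (hxj.trans hx'j.symm) hjne
      · -- x j = 0, x' j = 1 : T' = T + 1
        have hTT' : T' = T + 1 := by
          have : (T':ℝ) = (T:ℝ) + 1 := by
            rw [← hsx, ← hsx', ← h1, ← h2, ← h3, hxj, hx'j]; ring
          exact_mod_cast this
        rw [hTT']
        exact sum_down N n mt Mt T hnm hnM hMN hTlo (by omega) _ hE1 _
      · -- x j = 1, x' j = 0 : T = T' + 1
        have hTT' : T = T' + 1 := by
          have : (T:ℝ) = (T':ℝ) + 1 := by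
            rw [← hsx, ← hsx', ← h1, ← h2, ← h3, hxj, hx'j]; ring
          exact_mod_cast this
        rw [hTT']
        exact sum_up N n mt Mt T' hnm hnM hMN hT'lo (by omega) _ hE2 _
      · exact absurd (hxj.trans hx'j.symm) hjne
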